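/- Suppose all local iterates and the centralized iterate start at the same point (w_i(0) = v(0) for all i), each node updates w_i(t) = w_i(t−1) − η∇F_i(w_i(t−1)), the averaged iterate is w(t) = (∑_{i=1}^N D_i w_i(t))/D, and the centralized iterate updates v(t) = v(t−1) − η∇F(v(t−1)). Then for every integer t ≥ 0, ‖w(t) − v(t)‖ ≤ h(t), where h(x) = (δ/β)((ηβ+1)^x − 1) − ηδx. -/

import Mathlib

open InnerProductSpace

lemma grad_combo {E : Type*} [NormedAddCommGroup E] [InnerProductSpace ℝ E] [CompleteSpace E]
    {N : ℕ} (F : Fin N → E → ℝ) (D : Fin N → ℝ)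
    (hdiff : ∀ i, Differentiable ℝ (F i)) (x : E) :
    gradient (fun u => (∑ j, D j * F j u) / (∑ j, D j)) x
      = (∑ j, D j)⁻¹ • ∑ j, D j • gradient (F j) x := by
  have h1 : HasFDerivAt (fun u => (∑ j, D j * F j u) / (∑ j, D j))
      ((∑ j, D j)⁻¹ • ∑ j, D j • (toDual ℝ E (gradient (F j) x))) x := by
    have hs : HasFDerivAt (fun u => ∑ j, D j * F j u)
        (∑ j, D j • (toDual ℝ E (gradient (F j) x))) x := by
      apply HasFDerivAt.fun_sum
      intro j _
      exact ((hdiff j x).hasGradientAt.hasFDerivAt).const_mul (D j)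
    simpa [div_eq_inv_mul, smul_smul, mul_comm] using hs.const_mul (∑ j, D j)⁻¹
  have := h1.hasGradientAt.gradient
  rw [this]
  simp [map_smul, map_sum]
  rfl

/-- Theorem 1, norm version: If all local iterates and the centralized
iterate start at the same point, each node updates
`w_i(t) = w_i(t-1) - η • ∇F_i(w_i(t-1))`, the averaged iterate is
`w(t) = (∑ i, D i • w_i(t)) / D`, and the centralized iterate updates
`v(t) = v(t-1) - η • ∇F(v(t-1))` where `F = (∑ i, D i * F_i)/D`, then for every `t ≥ 0`,
`‖w(t) - v(t)‖ ≤ h(t) = (δ/β)((ηβ+1)^t - 1) - ηδt` with `δ = (∑ i, D i * δ_i)/D`. -/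
theorem averaged_iterate_gap_bound
    {E : Type*} [NormedAddCommGroup E] [InnerProductSpace ℝ E] [CompleteSpace E]
    {N : ℕ} (hN : 0 < N)
    (F : Fin N → E → ℝ) (D : Fin N → ℝ) (δi : Fin N → ℝ) (η β : ℝ)
    (hη : 0 < η) (hβ : 0 < β)
    (hD : ∀ i, 0 < D i) (hδi : ∀ i, 0 ≤ δi i)
    (hdiff : ∀ i, Differentiable ℝ (F i))
    (hsmooth : ∀ i, ∀ x x' : E,
      ‖gradient (F i) x - gradient (F i) x'‖ ≤ β * ‖x - x'‖)
    (hdiv : ∀ i, ∀ x : E,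
      ‖gradient (F i) x -
        gradient (fun u => (∑ j, D j * F j u) / (∑ j, D j)) x‖ ≤ δi i)
    (w : Fin N → ℕ → E) (v : ℕ → E)
    (h0 : ∀ i, w i 0 = v 0)
    (hw : ∀ i, ∀ t : ℕ, 1 ≤ t →
      w i t = w i (t - 1) - η • gradient (F i) (w i (t - 1)))
    (hv : ∀ t : ℕ, 1 ≤ t →
      v t = v (t - 1) -
        η • gradient (fun u => (∑ j, D j * F j u) / (∑ j, D j)) (v (t - 1))) :
    ∀ t : ℕ,
      ‖(1 / ∑ j, D j) • (∑ j, D j • w j t) - v t‖ ≤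
        ((∑ j, D j * δi j) / (∑ j, D j)) / β * ((η * β + 1) ^ t - 1) -
          η * ((∑ j, D j * δi j) / (∑ j, D j)) * t := by
  have hS : 0 < ∑ j, D j :=
    Finset.sum_pos (fun i _ => hD i) (Finset.univ_nonempty_iff.2 ⟨⟨0, hN⟩⟩)
  set S : ℝ := ∑ j, D j with hSdef
  set δ : ℝ := (∑ j, D j * δi j) / S with hδdef
  have hδ : 0 ≤ δ := div_nonneg (Finset.sum_nonneg fun i _ => mul_nonneg (hD i).le (hδi i)) hS.le
  have hgrad : ∀ x : E, gradient (fun u => (∑ j, D j * F j u) / (∑ j, D j)) x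
      = S⁻¹ • ∑ j, D j • gradient (F j) x := fun x => grad_combo F D hdiff x
  -- per-node bound
  have node : ∀ i, ∀ t : ℕ, ‖w i t - v t‖ ≤ δi i / β * ((η * β + 1) ^ t - 1) := by
    intro i t
    induction t with
    | zero => simp [h0 i]
    | succ t ih =>
      have hwt := hw i (t + 1) (by omega)
      have hvt := hv (t + 1) (by omega)
      simp only [Nat.add_sub_cancel] at hwt hvt
      have key : w i (t + 1) - v (t + 1)
          = (w i t - v t) - η • (gradient (F i) (w i t) - gradient (F i) (v t))
            - η • (gradient (F i) (v t)
              - gradient (fun u => (∑ j, D j * F j u) / (∑ j, D j)) (v t)) := by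
        rw [hwt, hvt]; module
      have hb : ‖w i (t + 1) - v (t + 1)‖
          ≤ ‖w i t - v t‖ + η * (β * ‖w i t - v t‖) + η * δi i := by
        rw [key]
        refine (norm_sub_le _ _).trans ?_
        gcongr
        · refine (norm_sub_le _ _).trans ?_
          gcongr
          rw [norm_smul, Real.norm_of_nonneg hη.le]
          exact mul_le_mul_of_nonneg_left (hsmooth i _ _) hη.le
        · rw [norm_smul, Real.norm_of_nonneg hη.le]
          exact mul_le_mul_of_nonneg_left (hdiv i (v t)) hη.le
      refine hb.trans ?_
      have h1 : ‖w i t - v t‖ + η * (β * ‖w i t - v t‖) + η * δi i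
          ≤ (1 + η * β) * (δi i / β * ((η * β + 1) ^ t - 1)) + η * δi i := by
        have he : ‖w i t - v t‖ + η * (β * ‖w i t - v t‖)
            = (1 + η * β) * ‖w i t - v t‖ := by ring
        rw [he]
        have h2 : (0:ℝ) ≤ 1 + η * β := by positivity
        nlinarith [mul_le_mul_of_nonneg_left ih h2]
      refine h1.trans_eq ?_
      rw [pow_succ]
      field_simp
      ring
  -- main induction
  intro t
  induction t with
  | zero =>
    have he : (∑ j, D j • w j 0) = S • v 0 := by
      rw [hSdef, Finset.sum_smul]
      exact Finset.sum_congr rfl fun j _ => by rw [h0 j]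
    rw [he, smul_smul, one_div, inv_mul_cancel₀ hS.ne', one_smul]
    simp
  | succ t ih =>
    have hvt := hv (t + 1) (by omega)
    simp only [Nat.add_sub_cancel] at hvt
    have key : (1 / S) • (∑ j, D j • w j (t + 1)) - v (t + 1)
        = ((1 / S) • (∑ j, D j • w j t) - v t)
          - η • ((1 / S) • ∑ j, D j • (gradient (F j) (w j t) - gradient (F j) (v t))) := by
      have hsum : (∑ j, D j • w j (t + 1))
          = (∑ j, D j • w j t) - η • ∑ j, D j • gradient (F j) (w j t) := by
        rw [Finset.smul_sum, ← Finset.sum_sub_distrib]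
        refine Finset.sum_congr rfl fun j _ => ?_
        rw [hw j (t + 1) (by omega)]
        simp only [Nat.add_sub_cancel]
        module
      have hsplit : (∑ j, D j • (gradient (F j) (w j t) - gradient (F j) (v t)))
          = (∑ j, D j • gradient (F j) (w j t)) - ∑ j, D j • gradient (F j) (v t) := by
        rw [← Finset.sum_sub_distrib]
        exact Finset.sum_congr rfl fun j _ => smul_sub _ _ _
      rw [hsum, hvt, hgrad, hsplit]
      module
    rw [key]
    refine (norm_sub_le _ _).trans ?_
    have hnorm2 : ‖η • ((1 / S) • ∑ j, D j • (gradient (F j) (w j t) - gradient (F j) (v t)))‖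
        ≤ η * δ * ((η * β + 1) ^ t - 1) := by
      rw [norm_smul, norm_smul, Real.norm_of_nonneg hη.le,
        Real.norm_of_nonneg (by positivity : (0:ℝ) ≤ 1 / S)]
      have hle : ‖∑ j, D j • (gradient (F j) (w j t) - gradient (F j) (v t))‖
          ≤ ∑ j, D j * δi j * ((η * β + 1) ^ t - 1) := by
        refine (norm_sum_le _ _).trans (Finset.sum_le_sum fun j _ => ?_)
        rw [norm_smul, Real.norm_of_nonneg (hD j).le]
        have hj : ‖gradient (F j) (w j t) - gradient (F j) (v t)‖
            ≤ β * (δi j / β * ((η * β + 1) ^ t - 1)) :=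
          (hsmooth j _ _).trans (mul_le_mul_of_nonneg_left (node j t) hβ.le)
        refine (mul_le_mul_of_nonneg_left hj (hD j).le).trans_eq ?_
        field_simp
      calc η * (1 / S * ‖∑ j, D j • (gradient (F j) (w j t) - gradient (F j) (v t))‖)
          ≤ η * (1 / S * (∑ j, D j * δi j * ((η * β + 1) ^ t - 1))) := by gcongr
        _ = η * δ * ((η * β + 1) ^ t - 1) := by
            rw [← Finset.sum_mul, hδdef]
            field_simp
    refine (add_le_add ih hnorm2).trans_eq ?_
    push_cast
    rw [pow_succ]
    field_simp
    ring
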